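/- (Correctness of Δ-edge anchored clique enumeration) Let R_i be a rule stratum and t ≥ 0. For each rule r ∈ R_i with arity at least 2 in which every body literal has arity at most 2, enumerate all k-cliques in the substitution consistency graph G(r, J_i^t) that are seeded at some edge in ΔE_{i,r}^t, reporting a clique only if its owner (the rank-minimal Δ-edge it contains, under a fixed total order on edges) coincides with the seeding edge, and let H_i^t be the set of heads of the ground rules corresponding to the reported cliques. Then H_i^t = {H(r̄) | r̄ ∈ gr(R_i, J_i^t), B(r̄) ∩ Δ_i^t ≠ ∅}, and consequently Δ_i^{t+1} = H_i^t \ J_i^t. -/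

import Mathlib

namespace Planning

/-- A term is either a variable or an object (constant). -/
inductive Term (V O : Type) : Type
  | var : V → Term V O
  | obj : O → Term V O
  deriving DecidableEq

/-- An atom is a predicate symbol applied to a list of terms. -/
structure Atom (P V O : Type) : Type where
  pred : P
  args : List (Term V O)

variable {P V O : Type}

def Term.isObj : Term V O → Prop
  | .var _ => False
  | .obj _ => True

/-- A ground atom mentions no variables. -/
def Atom.isGround (a : Atom P V O) : Prop := ∀ t ∈ a.args, t.isObj

/-- The (finite) set of variables occurring in an atom; its card is the arity of the literal. -/
def Atom.vars [DecidableEq V] (a : Atom P V O) : Finset V :=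
  (a.args.filterMap fun t => match t with
    | Term.var v => some v
    | Term.obj _ => none).toFinset

/-- Two terms match iff one of them is a variable, or they are equal objects. -/
def Term.Matches : Term V O → Term V O → Prop
  | .var _, _ => True
  | _, .var _ => True
  | .obj o, .obj o' => o = o'

/-- `P(x_1,...,x_n)` matches `P'(x'_1,...,x'_n)` iff `P = P'` and each pair of
corresponding terms matches. -/
def Atom.Matches (a b : Atom P V O) : Prop :=
  a.pred = b.pred ∧ List.Forall₂ Term.Matches a.args b.args

/-- Apply a partial substitution to a term. -/
def Term.subst (σ : V → Option O) : Term V O → Term V O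
  | .var v => match σ v with
    | some o => .obj o
    | none => .var v
  | .obj o => .obj o

/-- Apply a partial substitution to an atom. -/
def Atom.subst (σ : V → Option O) (a : Atom P V O) : Atom P V O :=
  ⟨a.pred, a.args.map (Term.subst σ)⟩

/-- Apply a total substitution `ρ`, yielding the ground atom `a[ρ]`. -/
def Atom.ground (ρ : V → O) (a : Atom P V O) : Atom P V O :=
  a.subst (fun v => some (ρ v))

/-- The partial substitution `[v, v']` induced by two vertices `v = x/o`, `v' = x'/o'`. -/
def pairSub [DecidableEq V] (v v' : V × O) : V → Option O :=
  fun x => if x = v.1 then some v.2 else if x = v'.1 then some v'.2 else none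

/-- The partial substitution `[v]` induced by a single vertex `v = x/o`. -/
def singleSub [DecidableEq V] (v : V × O) : V → Option O :=
  fun x => if x = v.1 then some v.2 else none

/-- An action schema (also used for the body of a Datalog rule): a finite set of
variables `X(a)`, positive precondition atoms and negative precondition atoms. -/
structure Schema (P V O : Type) : Type where
  vars : Finset V
  prePos : Set (Atom P V O)
  preNeg : Set (Atom P V O)

/-- The arity of a schema is `|X(a)|`. -/
def Schema.arity (a : Schema P V O) : ℕ := a.vars.card

/-- `x/o` is a vertex-consistent substitution: the single-vertex analogue of the
edge removal criteria. -/
def consistentVertex [DecidableEq V] (a : Schema P V O) (s : Set (Atom P V O))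
    (v : V × O) : Prop :=
  v.1 ∈ a.vars ∧
  (∀ p ∈ a.prePos, ∃ q ∈ s, (p.subst (singleSub v)).Matches q) ∧
  (∀ p ∈ a.preNeg, p.subst (singleSub v) ∉ s)

/-- `{v, v'}` is an edge of the substitution consistency graph `G_{a,s}`:
the pair is excluded neither by `I^≠` (two objects for one variable), nor by `I^+`
(some positive precondition atom, after applying `[v,v']`, matches no ground atom
of `s`), nor by `I^-` (some negative precondition atom, after applying `[v,v']`,
yields a ground atom contained in `s`). -/
def consistentEdge [DecidableEq V] (a : Schema P V O) (s : Set (Atom P V O))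
    (v v' : V × O) : Prop :=
  v.1 ∈ a.vars ∧ v'.1 ∈ a.vars ∧
  (v.1 = v'.1 → v.2 = v'.2) ∧
  (∀ p ∈ a.prePos, ∃ q ∈ s, (p.subst (pairSub v v')).Matches q) ∧
  (∀ p ∈ a.preNeg, p.subst (pairSub v v') ∉ s)

/-- The vertex set `{x/ρ(x) | x ∈ X(a)}` (exactly one vertex per variable of `a`)
is a `k`-clique of the substitution consistency graph `G_{a,s}`. -/
def IsCliqueOf [DecidableEq V] (a : Schema P V O) (s : Set (Atom P V O))
    (ρ : V → O) : Prop :=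
  ∀ x ∈ a.vars, ∀ x' ∈ a.vars, x ≠ x' → consistentEdge a s (x, ρ x) (x', ρ x')

/-- All ground precondition (resp. body) literals obtained by applying `ρ` hold in `s`:
positive ground atoms are in `s`, negative ground atoms are not in `s`. -/
def Applicable (a : Schema P V O) (s : Set (Atom P V O)) (ρ : V → O) : Prop :=
  (∀ p ∈ a.prePos, p.ground ρ ∈ s) ∧ (∀ p ∈ a.preNeg, p.ground ρ ∉ s)

/-- A Datalog rule: a head atom and a body (a set of positive and negative literals
over the rule's variables). -/
structure Rule (P V O : Type) : Type where
  head : Atom P V O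
  body : Schema P V O

end Planning

namespace Planning

/-- `e` is a Δ-edge of the clique `C(r̄) = {x/ρ(x) | x ∈ X(r)}`: an edge between
two distinct vertices of the clique that is present in `G(r, Jnew)` but absent
from `G(r, Jold)`, i.e. belongs to `ΔE_{i,r}^t`. -/
def CliqueDeltaEdge {P V O : Type} [DecidableEq V]
    (r : Rule P V O) (Jold Jnew : Set (Atom P V O)) (ρ : V → O)
    (e : (V × O) × (V × O)) : Prop :=
  ∃ x ∈ r.body.vars, ∃ x' ∈ r.body.vars, x ≠ x' ∧
    e = ((x, ρ x), (x', ρ x')) ∧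
    consistentEdge r.body Jnew (x, ρ x) (x', ρ x') ∧
    ¬ consistentEdge r.body Jold (x, ρ x) (x', ρ x')

end Planning
namespace Planning
variable {P V O : Type} [DecidableEq V]

namespace DeltaAux

lemma mem_vars {a : Atom P V O} {x : V} : x ∈ a.vars ↔ Term.var x ∈ a.args := by
  simp only [Atom.vars, List.mem_toFinset, List.mem_filterMap]
  constructor
  · rintro ⟨t, ht, he⟩
    cases t with
    | var v => simp only [Option.some.injEq] at he; subst he; exact ht
    | obj o => simp at he
  · intro h; exact ⟨_, h, rfl⟩

lemma ground_isGround (a : Atom P V O) (ρ : V → O) : (a.ground ρ).isGround := by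
  intro t ht
  simp only [Atom.ground, Atom.subst, List.mem_map] at ht
  obtain ⟨u, _, rfl⟩ := ht
  cases u <;> simp [Term.subst, Term.isObj]

lemma term_matches_eq {t u : Term V O} (ht : t.isObj) (hu : u.isObj)
    (h : t.Matches u) : t = u := by
  cases t <;> cases u <;> simp_all [Term.Matches, Term.isObj]

lemma list_matches_eq : ∀ {l₁ l₂ : List (Term V O)},
    List.Forall₂ Term.Matches l₁ l₂ →
    (∀ t ∈ l₁, t.isObj) → (∀ t ∈ l₂, t.isObj) → l₁ = l₂ := by
  intro l₁ l₂ h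
  induction h with
  | nil => intros; rfl
  | cons hab h ih =>
    intro h1 h2
    rw [term_matches_eq (h1 _ (by simp)) (h2 _ (by simp)) hab,
      ih (fun t ht => h1 t (by simp [ht])) (fun t ht => h2 t (by simp [ht]))]

lemma matches_eq {a b : Atom P V O} (ha : a.isGround) (hb : b.isGround)
    (h : a.Matches b) : a = b := by
  obtain ⟨hp, hargs⟩ := h
  cases a; cases b
  simp only [Atom.mk.injEq]
  exact ⟨hp, list_matches_eq hargs ha hb⟩

lemma subst_eq_ground {σ : V → Option O} {ρ : V → O} {p : Atom P V O}
    (h : ∀ x ∈ p.vars, σ x = some (ρ x)) : p.subst σ = p.ground ρ := by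
  unfold Atom.ground
  simp only [Atom.subst, Atom.mk.injEq, true_and]
  apply List.map_congr_left
  intro t ht
  cases t with
  | var v => simp [Term.subst, h v (mem_vars.mpr ht)]
  | obj o => rfl

lemma subst_matches_ground {σ : V → Option O} {ρ : V → O} (p : Atom P V O)
    (h : ∀ x, σ x = some (ρ x) ∨ σ x = none) : (p.subst σ).Matches (p.ground ρ) := by
  refine ⟨rfl, ?_⟩
  unfold Atom.ground
  simp only [Atom.subst]
  rw [List.forall₂_map_right_iff, List.forall₂_map_left_iff]
  apply List.forall₂_same.mpr
  intro t ht
  cases t with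
  | var v =>
    rcases h v with hv | hv <;> simp [Term.subst, hv, Term.Matches]
  | obj o => simp [Term.subst, Term.Matches]

lemma subst_eq_or_not_ground {σ : V → Option O} {ρ : V → O} {p : Atom P V O}
    (h : ∀ x, σ x = some (ρ x) ∨ σ x = none) :
    p.subst σ = p.ground ρ ∨ ¬ (p.subst σ).isGround := by
  by_cases hc : ∀ x ∈ p.vars, σ x = some (ρ x)
  · exact Or.inl (subst_eq_ground hc)
  · push_neg at hc
    obtain ⟨x, hx, hne⟩ := hc
    have hnone : σ x = none := (h x).resolve_left hne
    right
    intro hg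
    have h1 : Term.var x ∈ p.args := mem_vars.mp hx
    have h2 : Term.subst σ (Term.var x) ∈ (p.subst σ).args :=
      List.mem_map_of_mem h1
    have := hg _ h2
    simp [Term.subst, hnone, Term.isObj] at this

lemma pairSub_spec (x x' : V) (ρ : V → O) :
    ∀ y, pairSub (x, ρ x) (x', ρ x') y = some (ρ y) ∨
      pairSub (x, ρ x) (x', ρ x') y = none := by
  intro y
  unfold pairSub
  by_cases h1 : y = x
  · subst h1; simp
  · by_cases h2 : y = x'
    · subst h2; simp [h1]
    · simp [h1, h2]

lemma pairSub_agree {x x' : V} (ρ : V → O) {t : Finset V}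
    (hcov : t ⊆ ({x, x'} : Finset V)) :
    ∀ y ∈ t, pairSub (x, ρ x) (x', ρ x') y = some (ρ y) := by
  intro y hy
  rcases Finset.mem_insert.mp (hcov hy) with rfl | hy'
  · simp [pairSub]
  · rcases Finset.mem_singleton.mp hy' with rfl
    unfold pairSub
    by_cases h : y = x
    · simp [h]
    · simp [h]

lemma exists_two {s t : Finset V} (hs : 2 ≤ s.card) (hts : t ⊆ s) (ht : t.card ≤ 2) :
    ∃ x ∈ s, ∃ x' ∈ s, x ≠ x' ∧ t ⊆ {x, x'} := by
  interval_cases h : t.card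
  · have : t = ∅ := Finset.card_eq_zero.mp h
    obtain ⟨a, ha, b, hb, hab⟩ := Finset.one_lt_card.mp (by omega : 1 < s.card)
    exact ⟨a, ha, b, hb, hab, by simp [this]⟩
  · obtain ⟨a, rfl⟩ := Finset.card_eq_one.mp h
    obtain ⟨b, hb, hba⟩ := Finset.exists_mem_ne (s := s) (by omega) a
    exact ⟨a, hts (by simp), b, hb, Ne.symm hba, by intro y hy; simp_all⟩
  · obtain ⟨a, b, hab, rfl⟩ := Finset.card_eq_two.mp h
    exact ⟨a, hts (by simp), b, hts (by simp), hab, le_refl _⟩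

lemma finset_min {α : Type*} (r : α → α → Prop) (htot : ∀ a b, r a b ∨ r b a)
    (htrans : ∀ {a b c : α}, r a b → r b c → r a c)
    (s : Finset α) : s.Nonempty → ∃ e ∈ s, ∀ e' ∈ s, r e e' := by
  classical
  induction s using Finset.induction_on with
  | empty => rintro ⟨a, ha⟩; simp at ha
  | @insert a u ha ih =>
    intro _
    by_cases hu : u.Nonempty
    · obtain ⟨m, hm, hmin⟩ := ih hu
      rcases htot a m with hr | hr
      · refine ⟨a, Finset.mem_insert_self _ _, ?_⟩
        intro e' he'
        rcases Finset.mem_insert.mp he' with rfl | he'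
        · rcases htot e' e' with h | h <;> exact h
        · exact htrans hr (hmin _ he')
      · refine ⟨m, Finset.mem_insert_of_mem hm, ?_⟩
        intro e' he'
        rcases Finset.mem_insert.mp he' with rfl | he'
        · exact hr
        · exact hmin _ he'
    · refine ⟨a, Finset.mem_insert_self _ _, ?_⟩
      intro e' he'
      rcases Finset.mem_insert.mp he' with rfl | he'
      · rcases htot e' e' with h | h <;> exact h
      · exact absurd ⟨e', he'⟩ hu

lemma set_min {α : Type*} (r : α → α → Prop) (htot : ∀ a b, r a b ∨ r b a)
    (htrans : ∀ {a b c : α}, r a b → r b c → r a c)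
    {s : Set α} (hfin : s.Finite) (hne : s.Nonempty) :
    ∃ e ∈ s, ∀ e' ∈ s, r e e' := by
  obtain ⟨e, he, hmin⟩ := finset_min r htot htrans hfin.toFinset (by simpa using hne)
  exact ⟨e, by simpa using he, fun e' he' => hmin e' (by simpa using he')⟩

variable {r : Rule P V O} {Jold Jnew : Set (Atom P V O)} {ρ : V → O}

lemma clique_applicable
    (hground : ∀ q ∈ Jnew, q.isGround)
    (hbv : ∀ p ∈ r.body.prePos ∪ r.body.preNeg, p.vars ⊆ r.body.vars)
    (hk : 2 ≤ r.body.arity)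
    (har : ∀ p ∈ r.body.prePos ∪ r.body.preNeg, p.vars.card ≤ 2)
    (hcl : IsCliqueOf r.body Jnew ρ) : Applicable r.body Jnew ρ := by
  constructor
  · intro p hp
    obtain ⟨x, hx, x', hx', hne, hcov⟩ :=
      exists_two hk (hbv p (Or.inl hp)) (har p (Or.inl hp))
    obtain ⟨_, _, _, hpos, _⟩ := hcl x hx x' hx' hne
    obtain ⟨q, hq, hm⟩ := hpos p hp
    rw [subst_eq_ground (pairSub_agree ρ hcov)] at hm
    rwa [matches_eq (ground_isGround p ρ) (hground q hq) hm]
  · intro p hp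
    obtain ⟨x, hx, x', hx', hne, hcov⟩ :=
      exists_two hk (hbv p (Or.inr hp)) (har p (Or.inr hp))
    obtain ⟨_, _, _, _, hneg⟩ := hcl x hx x' hx' hne
    have := hneg p hp
    rwa [subst_eq_ground (pairSub_agree ρ hcov)] at this

lemma applicable_clique
    (hground : ∀ q ∈ Jnew, q.isGround)
    (happ : Applicable r.body Jnew ρ) : IsCliqueOf r.body Jnew ρ := by
  intro x hx x' hx' hne
  refine ⟨hx, hx', fun h => absurd h hne, ?_, ?_⟩
  · intro p hp
    exact ⟨p.ground ρ, happ.1 p hp, subst_matches_ground p (pairSub_spec x x' ρ)⟩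
  · intro p hp hmem
    rcases subst_eq_or_not_ground (p := p) (pairSub_spec x x' ρ) with he | hng
    · rw [he] at hmem; exact happ.2 p hp hmem
    · exact hng (hground _ hmem)

lemma delta_edge_witness (hsub : Jold ⊆ Jnew)
    (happ : Applicable r.body Jnew ρ)
    {e} (hde : CliqueDeltaEdge r Jold Jnew ρ e) :
    ∃ p ∈ r.body.prePos, p.ground ρ ∈ Jnew \ Jold := by
  obtain ⟨x, hx, x', hx', hne, _, hEnew, hEold⟩ := hde
  by_contra hno
  push_neg at hno
  apply hEold
  refine ⟨hx, hx', fun h => absurd h hne, ?_, ?_⟩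
  · intro p hp
    have h1 : p.ground ρ ∈ Jnew := happ.1 p hp
    have h2 : p.ground ρ ∈ Jold := by
      by_contra h2; exact hno p hp ⟨h1, h2⟩
    exact ⟨p.ground ρ, h2, subst_matches_ground p (pairSub_spec x x' ρ)⟩
  · intro p hp hmem
    exact hEnew.2.2.2.2 p hp (hsub hmem)

lemma witness_delta_edge (hsub : Jold ⊆ Jnew)
    (hground : ∀ q ∈ Jnew, q.isGround)
    (hbv : ∀ p ∈ r.body.prePos ∪ r.body.preNeg, p.vars ⊆ r.body.vars)
    (hk : 2 ≤ r.body.arity)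
    (har : ∀ p ∈ r.body.prePos ∪ r.body.preNeg, p.vars.card ≤ 2)
    (hcl : IsCliqueOf r.body Jnew ρ)
    {p} (hp : p ∈ r.body.prePos) (hmem : p.ground ρ ∈ Jnew \ Jold) :
    ∃ e, CliqueDeltaEdge r Jold Jnew ρ e := by
  obtain ⟨x, hx, x', hx', hne, hcov⟩ :=
    exists_two hk (hbv p (Or.inl hp)) (har p (Or.inl hp))
  refine ⟨_, x, hx, x', hx', hne, rfl, hcl x hx x' hx' hne, ?_⟩
  rintro ⟨_, _, _, hpos, _⟩
  obtain ⟨q, hq, hm⟩ := hpos p hp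
  rw [subst_eq_ground (pairSub_agree ρ hcov)] at hm
  have heq := matches_eq (ground_isGround p ρ) (hground q (hsub hq)) hm
  exact hmem.2 (heq ▸ hq)

end DeltaAux
end Planning

open Planning in
/-- Correctness of Δ-edge anchored clique enumeration,
Theorem 2 of the paper. Let `Jold = J_i^{t-1} ⊆ Jnew = J_i^t` (so
`Δ_i^t = Jnew \ Jold`), and let `Ri` be a rule stratum in which every rule has
arity at least `2` and every body literal has arity at most `2`. Enumerate, for
each rule `r ∈ Ri`, all `k`-cliques of `G(r, J_i^t)` seeded at some edge of
`ΔE_{i,r}^t`, reporting a clique only if its owner — its rank-minimal Δ-edge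
under the fixed total order `rank` — coincides with the seeding edge, and let
`H` be the set of heads of the ground rules corresponding to the reported
cliques. Then `H = {H(r̄) | r̄ ∈ gr(Ri, J_i^t), B(r̄) ∩ Δ_i^t ≠ ∅}` and
consequently `Δ_i^{t+1} = H \ J_i^t`. -/
theorem correctness_of_delta_edge_anchored_enumeration
    {P V O : Type} [DecidableEq V]
    (Ri : Set (Rule P V O)) (Jold Jnew : Set (Atom P V O))
    (hsub : Jold ⊆ Jnew)
    (hground : ∀ q ∈ Jnew, q.isGround)
    (hbodyvars : ∀ r ∈ Ri, ∀ p ∈ r.body.prePos ∪ r.body.preNeg, p.vars ⊆ r.body.vars)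
    (hk : ∀ r ∈ Ri, 2 ≤ r.body.arity)
    (harity : ∀ r ∈ Ri, ∀ p ∈ r.body.prePos ∪ r.body.preNeg, p.vars.card ≤ 2)
    (rank : ((V × O) × (V × O)) → ((V × O) × (V × O)) → Prop)
    (hrank : IsLinearOrder ((V × O) × (V × O)) rank)
    (H Δnext : Set (Atom P V O))
    -- `H`: heads of ground rules of reported cliques (clique with a Δ-edge owner
    -- coinciding with some seeding Δ-edge, i.e. with a rank-minimal Δ-edge).
    (hH : H = { h | ∃ r ∈ Ri, ∃ ρ : V → O, IsCliqueOf r.body Jnew ρ ∧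
        (∃ e, CliqueDeltaEdge r Jold Jnew ρ e ∧
          ∀ e', CliqueDeltaEdge r Jold Jnew ρ e' → rank e e') ∧
        h = r.head.ground ρ })
    -- `Δ_i^{t+1}` as defined by semi-naive evaluation.
    (hΔnext : Δnext = { h | ∃ r ∈ Ri, ∃ ρ : V → O, Applicable r.body Jnew ρ ∧
        (∃ p ∈ r.body.prePos, p.ground ρ ∈ Jnew \ Jold) ∧
        h = r.head.ground ρ } \ Jnew) :
    H = { h | ∃ r ∈ Ri, ∃ ρ : V → O, Applicable r.body Jnew ρ ∧
        (∃ p ∈ r.body.prePos, p.ground ρ ∈ Jnew \ Jold) ∧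
        h = r.head.ground ρ } ∧
    Δnext = H \ Jnew := by
  haveI := hrank
  have hmain : H = { h | ∃ r ∈ Ri, ∃ ρ : V → O, Applicable r.body Jnew ρ ∧
      (∃ p ∈ r.body.prePos, p.ground ρ ∈ Jnew \ Jold) ∧
      h = r.head.ground ρ } := by
    rw [hH]
    ext h
    simp only [Set.mem_setOf_eq]
    constructor
    · rintro ⟨r, hr, ρ, hcl, ⟨e, hde, -⟩, rfl⟩
      have happ := DeltaAux.clique_applicable hground (hbodyvars r hr) (hk r hr)
        (harity r hr) hcl
      exact ⟨r, hr, ρ, happ, DeltaAux.delta_edge_witness hsub happ hde, rfl⟩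
    · rintro ⟨r, hr, ρ, happ, ⟨p, hp, hpm⟩, rfl⟩
      have hcl := DeltaAux.applicable_clique hground happ
      have hne : {e | CliqueDeltaEdge r Jold Jnew ρ e}.Nonempty :=
        DeltaAux.witness_delta_edge hsub hground (hbodyvars r hr) (hk r hr)
          (harity r hr) hcl hp hpm
      have hfin : {e | CliqueDeltaEdge r Jold Jnew ρ e}.Finite := by
        apply Set.Finite.subset (Set.Finite.image
          (f := fun q : V × V => ((q.1, ρ q.1), (q.2, ρ q.2)))
          (r.body.vars ×ˢ r.body.vars).finite_toSet)
        rintro e ⟨x, hx, x', hx', -, rfl, -⟩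
        exact ⟨(x, x'), by simp [Finset.mem_product, hx, hx'], rfl⟩
      obtain ⟨e, he, hmin⟩ := DeltaAux.set_min rank
        (fun a b => (total_of rank a b))
        (fun hab hbc => Trans.trans hab hbc) hfin hne
      exact ⟨r, hr, ρ, hcl, ⟨e, he, hmin⟩, rfl⟩
  refine ⟨hmain, ?_⟩
  rw [hΔnext, hmain]
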